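/- arXiv:math/0702102 — 2 statements merged into one kernel-verified Lean document; each statement's English description precedes it below -/
import Mathlib

section
/- Let {K_t} and {L_t} be linear parameter systems in R^n along the same direction v, containing the origin, generated by (n+1)-dimensional convex bodies K̃ and L̃ respectively. Then for all t and p ≥ 1, the p-sum K_t +_p L_t equals the projection of K̃ +_p L̃ onto e_{n+1}^⊥ along e_{n+1} − t v. Consequently {K_t +_p L_t} is a linear parameter system along v. -/
open MeasureTheory Set Real Pointwise Filter

noncomputable section

/-- Euclidean space ℝⁿ. -/
abbrev E (n : ℕ) := EuclideanSpace ℝ (Fin n)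

/-- The support function of a set `K`: `h_K(u) = sup_{x ∈ K} ⟨x, u⟩`. -/
noncomputable def supp {n : ℕ} (K : Set (E n)) (u : E n) : ℝ :=
  sSup ((fun x => (inner ℝ x u : ℝ)) '' K)

/-- The Firey `p`-sum of `K` and `L` (both containing the origin): the convex body
whose support function is `(h_K ^ p + h_L ^ p) ^ (1/p)`. -/
noncomputable def pSum {n : ℕ} (K L : Set (E n)) (p : ℝ) : Set (E n) :=
  {x | ∀ u : E n, (inner ℝ x u : ℝ) ≤ (supp K u ^ p + supp L u ^ p) ^ (1 / p)}

end

section Aux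

variable {m : ℕ}

lemma aux_bddAbove {K : Set (E m)} (hK : IsCompact K) (u : E m) :
    BddAbove ((fun x => (inner ℝ x u : ℝ)) '' K) :=
  (hK.image (continuous_id.inner continuous_const)).bddAbove

lemma le_supp {K : Set (E m)} (hK : IsCompact K) {x : E m} (hx : x ∈ K) (u : E m) :
    (inner ℝ x u : ℝ) ≤ supp K u :=
  le_csSup (aux_bddAbove hK u) (Set.mem_image_of_mem _ hx)

lemma supp_le {K : Set (E m)} (hne : K.Nonempty) {u : E m} {c : ℝ}
    (h : ∀ x ∈ K, (inner ℝ x u : ℝ) ≤ c) : supp K u ≤ c := by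
  refine csSup_le (hne.image _) ?_
  rintro _ ⟨x, hx, rfl⟩
  exact h x hx

lemma supp_nonneg {K : Set (E m)} (hK : IsCompact K) (h0 : (0 : E m) ∈ K) (u : E m) :
    0 ≤ supp K u := by
  simpa using le_supp hK h0 u

lemma supp_add_le {K : Set (E m)} (hK : IsCompact K) (hne : K.Nonempty) (u w : E m) :
    supp K (u + w) ≤ supp K u + supp K w := by
  refine supp_le hne fun x hx => ?_
  rw [inner_add_right]
  exact add_le_add (le_supp hK hx u) (le_supp hK hx w)

lemma supp_smul {K : Set (E m)} (hK : IsCompact K) (hne : K.Nonempty) {c : ℝ} (hc : 0 < c)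
    (u : E m) : supp K (c • u) = c * supp K u := by
  refine le_antisymm (supp_le hne fun x hx => ?_) ?_
  · rw [real_inner_smul_right]
    exact mul_le_mul_of_nonneg_left (le_supp hK hx u) hc.le
  · have h2 : supp K u ≤ c⁻¹ * supp K (c • u) := by
      refine supp_le hne fun x hx => ?_
      have h := le_supp hK hx (c • u)
      rw [real_inner_smul_right] at h
      have : c⁻¹ * (c * (inner ℝ x u : ℝ)) ≤ c⁻¹ * supp K (c • u) :=
        mul_le_mul_of_nonneg_left h (inv_nonneg.2 hc.le)
      rwa [inv_mul_cancel_left₀ hc.ne'] at this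
    calc c * supp K u ≤ c * (c⁻¹ * supp K (c • u)) :=
          mul_le_mul_of_nonneg_left h2 hc.le
      _ = supp K (c • u) := by field_simp

lemma supp_norm_bound {K : Set (E m)} (hK : IsCompact K) (hne : K.Nonempty) :
    ∃ C : ℝ, 0 ≤ C ∧ ∀ u : E m, supp K u ≤ C * ‖u‖ := by
  obtain ⟨C, hC⟩ := hK.isBounded.exists_norm_le
  refine ⟨max C 0, le_max_right _ _, fun u => supp_le hne fun x hx => ?_⟩
  calc (inner ℝ x u : ℝ) ≤ ‖x‖ * ‖u‖ := real_inner_le_norm x u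
    _ ≤ max C 0 * ‖u‖ :=
        mul_le_mul_of_nonneg_right ((hC x hx).trans (le_max_left _ _)) (norm_nonneg u)

variable {K L : Set (E m)} {p : ℝ}

/-- The would-be support function of the `p`-sum. -/
noncomputable def pF (K L : Set (E m)) (p : ℝ) (u : E m) : ℝ :=
  (supp K u ^ p + supp L u ^ p) ^ (1 / p)

lemma pF_nonneg (hK : IsCompact K) (h0K : (0:E m) ∈ K) (hL : IsCompact L) (h0L : (0:E m) ∈ L)
    (u : E m) : 0 ≤ pF K L p u :=
  Real.rpow_nonneg (add_nonneg (Real.rpow_nonneg (supp_nonneg hK h0K u) p)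
    (Real.rpow_nonneg (supp_nonneg hL h0L u) p)) _

lemma mem_pSum_iff {x : E m} : x ∈ pSum K L p ↔ ∀ u : E m, (inner ℝ x u : ℝ) ≤ pF K L p u :=
  Iff.rfl

lemma zero_mem_pSum (hK : IsCompact K) (h0K : (0:E m) ∈ K) (hL : IsCompact L)
    (h0L : (0:E m) ∈ L) : (0 : E m) ∈ pSum K L p := by
  intro u
  rw [inner_zero_left]
  exact pF_nonneg hK h0K hL h0L u

lemma pSum_convex : Convex ℝ (pSum K L p) := by
  intro x hx y hy a b ha hb hab u
  have : (inner ℝ (a • x + b • y) u : ℝ) = a * (inner ℝ x u : ℝ) + b * (inner ℝ y u : ℝ) := by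
    rw [inner_add_left, real_inner_smul_left, real_inner_smul_left]
  rw [this]
  calc a * (inner ℝ x u : ℝ) + b * (inner ℝ y u : ℝ)
      ≤ a * pF K L p u + b * pF K L p u :=
        add_le_add (mul_le_mul_of_nonneg_left (hx u) ha)
          (mul_le_mul_of_nonneg_left (hy u) hb)
    _ = pF K L p u := by rw [← add_mul, hab, one_mul]

lemma pSum_isClosed : IsClosed (pSum K L p) := by
  have : pSum K L p = ⋂ u : E m, {x : E m | (inner ℝ x u : ℝ) ≤ pF K L p u} := by
    ext x; simp [pSum, Set.mem_iInter, pF]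
  rw [this]
  exact isClosed_iInter fun u =>
    isClosed_le (continuous_id.inner continuous_const) continuous_const

lemma pF_le_norm (hp : 1 ≤ p) (hK : IsCompact K) (h0K : (0:E m) ∈ K) (hL : IsCompact L)
    (h0L : (0:E m) ∈ L) : ∃ R : ℝ, 0 ≤ R ∧ ∀ u : E m, pF K L p u ≤ R * ‖u‖ := by
  have hp0 : (0:ℝ) < p := lt_of_lt_of_le one_pos hp
  obtain ⟨CK, hCK0, hCK⟩ := supp_norm_bound hK ⟨0, h0K⟩
  obtain ⟨CL, hCL0, hCL⟩ := supp_norm_bound hL ⟨0, h0L⟩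
  refine ⟨(CK ^ p + CL ^ p) ^ (1/p), Real.rpow_nonneg
    (add_nonneg (Real.rpow_nonneg hCK0 p) (Real.rpow_nonneg hCL0 p)) _, fun u => ?_⟩
  have h1 : pF K L p u ≤ ((CK * ‖u‖) ^ p + (CL * ‖u‖) ^ p) ^ (1/p) := by
    refine Real.rpow_le_rpow (add_nonneg (Real.rpow_nonneg (supp_nonneg hK h0K u) p)
      (Real.rpow_nonneg (supp_nonneg hL h0L u) p))
      (add_le_add (Real.rpow_le_rpow (supp_nonneg hK h0K u) (hCK u) hp0.le)
        (Real.rpow_le_rpow (supp_nonneg hL h0L u) (hCL u) hp0.le))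
      (by positivity)
  refine h1.trans_eq ?_
  rw [Real.mul_rpow hCK0 (norm_nonneg u), Real.mul_rpow hCL0 (norm_nonneg u), ← add_mul,
    Real.mul_rpow (add_nonneg (Real.rpow_nonneg hCK0 p) (Real.rpow_nonneg hCL0 p))
      (Real.rpow_nonneg (norm_nonneg u) p),
    ← Real.rpow_mul (norm_nonneg u), mul_one_div_cancel hp0.ne', Real.rpow_one]

lemma pSum_isCompact (hp : 1 ≤ p) (hK : IsCompact K) (h0K : (0:E m) ∈ K) (hL : IsCompact L)
    (h0L : (0:E m) ∈ L) : IsCompact (pSum K L p) := by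
  obtain ⟨R, hR0, hR⟩ := pF_le_norm hp hK h0K hL h0L
  refine Metric.isCompact_of_isClosed_isBounded pSum_isClosed (isBounded_iff_forall_norm_le.2 ⟨R, ?_⟩)
  intro x hx
  have h := (hx x).trans (hR x)
  rw [real_inner_self_eq_norm_sq] at h
  rcases eq_or_lt_of_le (norm_nonneg x) with h0 | h0
  · rw [← h0]; exact hR0
  · have : ‖x‖ * ‖x‖ ≤ R * ‖x‖ := by nlinarith
    exact le_of_mul_le_mul_right this h0

lemma pF_smul (hp : 1 ≤ p) (hK : IsCompact K) (h0K : (0:E m) ∈ K) (hL : IsCompact L)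
    (h0L : (0:E m) ∈ L) {c : ℝ} (hc : 0 < c) (u : E m) :
    pF K L p (c • u) = c * pF K L p u := by
  have hp0 : (0:ℝ) < p := lt_of_lt_of_le one_pos hp
  unfold pF
  rw [supp_smul hK ⟨0, h0K⟩ hc, supp_smul hL ⟨0, h0L⟩ hc,
    Real.mul_rpow hc.le (supp_nonneg hK h0K u), Real.mul_rpow hc.le (supp_nonneg hL h0L u),
    ← mul_add,
    Real.mul_rpow (Real.rpow_nonneg hc.le p)
      (add_nonneg (Real.rpow_nonneg (supp_nonneg hK h0K u) p)
        (Real.rpow_nonneg (supp_nonneg hL h0L u) p)),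
    ← Real.rpow_mul hc.le, mul_one_div_cancel hp0.ne', Real.rpow_one]

lemma pF_add_le (hp : 1 ≤ p) (hK : IsCompact K) (h0K : (0:E m) ∈ K) (hL : IsCompact L)
    (h0L : (0:E m) ∈ L) (u w : E m) :
    pF K L p (u + w) ≤ pF K L p u + pF K L p w := by
  have hp0 : (0:ℝ) < p := lt_of_lt_of_le one_pos hp
  have hMink := Real.Lp_add_le_of_nonneg (f := ![supp K u, supp L u])
    (g := ![supp K w, supp L w]) (s := Finset.univ) hp
    (by intro i _; fin_cases i <;>
        simp [supp_nonneg hK h0K, supp_nonneg hL h0L])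
    (by intro i _; fin_cases i <;>
        simp [supp_nonneg hK h0K, supp_nonneg hL h0L])
  rw [Fin.sum_univ_two, Fin.sum_univ_two, Fin.sum_univ_two] at hMink
  simp only [Matrix.cons_val_zero, Matrix.cons_val_one, Matrix.head_cons] at hMink
  refine le_trans ?_ hMink
  unfold pF
  refine Real.rpow_le_rpow (add_nonneg (Real.rpow_nonneg (supp_nonneg hK h0K _) p)
    (Real.rpow_nonneg (supp_nonneg hL h0L _) p))
    (add_le_add
      (Real.rpow_le_rpow (supp_nonneg hK h0K _) (supp_add_le hK ⟨0, h0K⟩ u w) hp0.le)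
      (Real.rpow_le_rpow (supp_nonneg hL h0L _) (supp_add_le hL ⟨0, h0L⟩ u w) hp0.le))
    (by positivity)

lemma supp_pSum (hp : 1 ≤ p) (hK : IsCompact K) (h0K : (0:E m) ∈ K) (hL : IsCompact L)
    (h0L : (0:E m) ∈ L) (u : E m) : supp (pSum K L p) u = pF K L p u := by
  have hp0 : (0:ℝ) < p := lt_of_lt_of_le one_pos hp
  have hSne : (pSum K L p).Nonempty := ⟨0, zero_mem_pSum hK h0K hL h0L⟩
  have hScp : IsCompact (pSum K L p) := pSum_isCompact hp hK h0K hL h0L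
  refine le_antisymm (supp_le hSne fun x hx => hx u) ?_
  rcases eq_or_ne u 0 with rfl | hu
  · have : pF K L p (0 : E m) = 0 := by
      unfold pF
      have hK0 : supp K (0 : E m) = 0 := by
        refine le_antisymm (supp_le ⟨0, h0K⟩ fun x _ => by simp) ?_
        simpa using le_supp hK h0K (0 : E m)
      have hL0 : supp L (0 : E m) = 0 := by
        refine le_antisymm (supp_le ⟨0, h0L⟩ fun x _ => by simp) ?_
        simpa using le_supp hL h0L (0 : E m)
      rw [hK0, hL0, Real.zero_rpow hp0.ne', add_zero,
        Real.zero_rpow (by positivity : (1:ℝ)/p ≠ 0)]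
    rw [this]
    exact supp_nonneg hScp (zero_mem_pSum hK h0K hL h0L) 0
  · -- Hahn–Banach extension of the functional `c • u ↦ c * pF u` dominated by `pF`.
    set N : E m → ℝ := pF K L p with hN
    have hN_nonneg : ∀ x, 0 ≤ N x := pF_nonneg hK h0K hL h0L
    have hN_hom : ∀ c : ℝ, 0 < c → ∀ x, N (c • x) = c * N x :=
      fun c hc x => pF_smul hp hK h0K hL h0L hc x
    have hN_add : ∀ x y, N (x + y) ≤ N x + N y := pF_add_le hp hK h0K hL h0L
    set f : E m →ₗ.[ℝ] ℝ := LinearPMap.mkSpanSingleton u (N u) hu with hf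
    have hfdom : ∀ z : f.domain, f z ≤ N z := by
      rintro ⟨z, hz⟩
      obtain ⟨c, rfl⟩ := Submodule.mem_span_singleton.1 hz
      have happly : f ⟨c • u, hz⟩ = c • N u := LinearPMap.mkSpanSingleton'_apply _ _ _ c _
      rw [happly]
      rcases lt_trichotomy c 0 with hc | hc | hc
      · calc c • N u ≤ 0 := by
              simpa [smul_eq_mul] using mul_nonpos_of_nonpos_of_nonneg hc.le (hN_nonneg u)
          _ ≤ N (c • u) := hN_nonneg _
      · subst hc; simpa using hN_nonneg ((0:ℝ) • u)
      · rw [hN_hom c hc u]; simp [smul_eq_mul]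
    obtain ⟨g, hg_eq, hg_le⟩ := exists_extension_of_le_sublinear f N hN_hom hN_add hfdom
    have hgu : g u = N u := by
      have := hg_eq ⟨u, Submodule.mem_span_singleton_self u⟩
      rw [this, LinearPMap.mkSpanSingleton_apply]
    set z : E m := (InnerProductSpace.toDual ℝ (E m)).symm
      ⟨g, g.continuous_of_finiteDimensional⟩ with hzdef
    have hz_inner : ∀ w : E m, (inner ℝ z w : ℝ) = g w := fun w =>
      InnerProductSpace.toDual_symm_apply
    have hzS : z ∈ pSum K L p := fun w => by rw [hz_inner w]; exact hg_le w
    have := le_supp hScp hzS u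
    rwa [hz_inner u, hgu] at this

/-- A compact convex set is the intersection of the half-spaces given by its support function. -/
lemma compact_convex_eq_supp_set {C : Set (E m)} (hco : Convex ℝ C) (hcp : IsCompact C)
    (hne : C.Nonempty) : C = {x : E m | ∀ u : E m, (inner ℝ x u : ℝ) ≤ supp C u} := by
  ext x
  constructor
  · exact fun hx u => le_supp hcp hx u
  · intro hx
    by_contra hxC
    obtain ⟨f, s, hfs, hsx⟩ := geometric_hahn_banach_closed_point hco hcp.isClosed hxC
    set y : E m := (InnerProductSpace.toDual ℝ (E m)).symm f with hy
    have hy_inner : ∀ w : E m, (inner ℝ y w : ℝ) = f w := fun w =>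
      InnerProductSpace.toDual_symm_apply
    have hsupp : supp C y ≤ s := supp_le hne fun a ha => by
      rw [real_inner_comm, hy_inner a]
      exact (hfs a ha).le
    have h1 : (inner ℝ x y : ℝ) ≤ s := (hx y).trans hsupp
    have h2 : s < (inner ℝ x y : ℝ) := by rw [real_inner_comm, hy_inner x]; exact hsx
    exact absurd h1 (not_le.2 h2)

end Aux

/-- The `p`-sum of two linear parameter systems along the same direction `v` is the
projection of the `p`-sum of the generating bodies, hence again a linear parameter system. -/
theorem pSum_lps {n : ℕ} (Kt Lt : Set (E (n + 1)))
    (hKco : Convex ℝ Kt) (hKcp : IsCompact Kt) (h0K : (0 : E (n + 1)) ∈ Kt)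
    (hLco : Convex ℝ Lt) (hLcp : IsCompact Lt) (h0L : (0 : E (n + 1)) ∈ Lt)
    (e : E (n + 1)) (he : e = EuclideanSpace.single (Fin.last n) 1)
    (v : E (n + 1)) (hv : (inner ℝ v e : ℝ) = 0) (p : ℝ) (hp : 1 ≤ p) :
    (∀ t : ℝ,
      pSum ((fun z : E (n + 1) => z - (inner ℝ z e : ℝ) • (e - t • v)) '' Kt)
           ((fun z : E (n + 1) => z - (inner ℝ z e : ℝ) • (e - t • v)) '' Lt) p
        = (fun z : E (n + 1) => z - (inner ℝ z e : ℝ) • (e - t • v)) '' pSum Kt Lt p) ∧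
    ∃ M : Set (E (n + 1)), Convex ℝ M ∧ IsCompact M ∧
      ∀ t : ℝ,
        pSum ((fun z : E (n + 1) => z - (inner ℝ z e : ℝ) • (e - t • v)) '' Kt)
             ((fun z : E (n + 1) => z - (inner ℝ z e : ℝ) • (e - t • v)) '' Lt) p
          = (fun z : E (n + 1) => z - (inner ℝ z e : ℝ) • (e - t • v)) '' M := by
  have key : ∀ t : ℝ,
      pSum ((fun z : E (n + 1) => z - (inner ℝ z e : ℝ) • (e - t • v)) '' Kt)
           ((fun z : E (n + 1) => z - (inner ℝ z e : ℝ) • (e - t • v)) '' Lt) p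
        = (fun z : E (n + 1) => z - (inner ℝ z e : ℝ) • (e - t • v)) '' pSum Kt Lt p := by
    intro t
    set pr : E (n + 1) → E (n + 1) :=
      fun z => z - (inner ℝ z e : ℝ) • (e - t • v) with hpr
    set Aop : E (n + 1) → E (n + 1) :=
      fun u => u - (inner ℝ (e - t • v) u : ℝ) • e with hAop
    have hadj : ∀ z u : E (n + 1), (inner ℝ (pr z) u : ℝ) = (inner ℝ z (Aop u) : ℝ) := by
      intro z u
      simp only [hpr, hAop, inner_sub_left, inner_sub_right, real_inner_smul_left,
        real_inner_smul_right]
      ring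
    have hsupp_img : ∀ (K : Set (E (n + 1))) (u : E (n + 1)),
        supp (pr '' K) u = supp K (Aop u) := by
      intro K u
      unfold supp
      rw [Set.image_image]
      simp only [hadj]
    have hprlin : IsLinearMap ℝ pr := by
      constructor
      · intro a b
        simp only [hpr, inner_add_left, add_smul]
        abel
      · intro c a
        simp only [hpr, real_inner_smul_left, smul_sub, smul_smul, mul_assoc]
    have hprcont : Continuous pr :=
      continuous_id.sub (by fun_prop)
    have hScv : Convex ℝ (pSum Kt Lt p) := pSum_convex
    have hScp : IsCompact (pSum Kt Lt p) := pSum_isCompact hp hKcp h0K hLcp h0L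
    have h0S : (0 : E (n + 1)) ∈ pSum Kt Lt p := zero_mem_pSum hKcp h0K hLcp h0L
    have hprScv : Convex ℝ (pr '' pSum Kt Lt p) := hScv.is_linear_image hprlin
    have hprScp : IsCompact (pr '' pSum Kt Lt p) := hScp.image hprcont
    have hprSne : (pr '' pSum Kt Lt p).Nonempty := ⟨pr 0, Set.mem_image_of_mem _ h0S⟩
    have hb : ∀ u : E (n + 1),
        (supp (pr '' Kt) u ^ p + supp (pr '' Lt) u ^ p) ^ (1 / p)
          = supp (pr '' pSum Kt Lt p) u := by
      intro u
      rw [hsupp_img Kt u, hsupp_img Lt u, hsupp_img (pSum Kt Lt p) u,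
        supp_pSum hp hKcp h0K hLcp h0L]
      rfl
    have hmain : pSum (pr '' Kt) (pr '' Lt) p = pr '' pSum Kt Lt p := by
      rw [compact_convex_eq_supp_set hprScv hprScp hprSne]
      ext x
      show (∀ u : E (n+1), (inner ℝ x u : ℝ)
              ≤ (supp (pr '' Kt) u ^ p + supp (pr '' Lt) u ^ p) ^ (1/p))
          ↔ ∀ u : E (n+1), (inner ℝ x u : ℝ) ≤ supp (pr '' pSum Kt Lt p) u
      exact forall_congr' fun u => by rw [hb u]
    exact hmain
  exact ⟨key, pSum Kt Lt p, pSum_convex, pSum_isCompact hp hKcp h0K hLcp h0L, key⟩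
end

section
/- For a linear parameter system {K_t} in R^n (K_t = conv{x_i + λ_i t v : i ∈ I}), the n-dimensional volume V_n(K_t) is a convex function of t. -/
open MeasureTheory Set Real Pointwise Filter

section Aux

/-- Volume of a compact convex subset of ℝ. -/
private lemma vol1_eq {S : Set ℝ} (hc : IsCompact S) (hconv : Convex ℝ S) :
    volume S = ENNReal.ofReal (sSup S - sInf S) := by
  rcases S.eq_empty_or_nonempty with rfl | hne
  · simp
  · nth_rewrite 1 [eq_Icc_of_connected_compact ⟨hne, hconv.isPreconnected⟩ hc]
    rw [Real.volume_Icc]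

/-- The 1-dimensional "shadow" map. -/
private def gmap (t : ℝ) : (ℝ × ℝ) → ℝ := fun p => p.1 + t * p.2

private lemma gmap_linear (t : ℝ) : IsLinearMap ℝ (gmap t) := by
  constructor
  · intro p q; simp [gmap]; ring
  · intro c p; simp [gmap, smul_eq_mul]; ring

/-- Key 1-dimensional estimate : the length of the shadow of a compact convex planar set
is a convex function of `t`. -/
private lemma slice_le {D : Set (ℝ × ℝ)} (hD : IsCompact D) (hconv : Convex ℝ D)
    {a b t0 t1 : ℝ} (ha : 0 ≤ a) (hb : 0 ≤ b) (hab : a + b = 1) :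
    volume (gmap (a * t0 + b * t1) '' D)
      ≤ ENNReal.ofReal a * volume (gmap t0 '' D)
        + ENNReal.ofReal b * volume (gmap t1 '' D) := by
  rcases D.eq_empty_or_nonempty with rfl | hne
  · simp [gmap]
  have hcont : ∀ t, Continuous (gmap t) := fun t => by
    exact continuous_fst.add (continuous_const.mul continuous_snd)
  have himc : ∀ t, IsCompact (gmap t '' D) := fun t => hD.image (hcont t)
  have himconv : ∀ t, Convex ℝ (gmap t '' D) := fun t => hconv.is_linear_image (gmap_linear t)
  have himne : ∀ t, (gmap t '' D).Nonempty := fun t => hne.image _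
  have hbd : ∀ t, BddAbove (gmap t '' D) := fun t => (himc t).bddAbove
  have hbdd : ∀ t, BddBelow (gmap t '' D) := fun t => (himc t).bddBelow
  have hdiff : ∀ t, 0 ≤ sSup (gmap t '' D) - sInf (gmap t '' D) := fun t =>
    sub_nonneg.2 (csInf_le_csSup (himne t) (hbdd t) (hbd t))
  rw [vol1_eq (himc _) (himconv _), vol1_eq (himc t0) (himconv t0),
    vol1_eq (himc t1) (himconv t1)]
  have hSup : sSup (gmap (a * t0 + b * t1) '' D)
      ≤ a * sSup (gmap t0 '' D) + b * sSup (gmap t1 '' D) := by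
    apply csSup_le (himne _)
    rintro r ⟨p, hp, rfl⟩
    have h0 : gmap t0 p ≤ sSup (gmap t0 '' D) := le_csSup (hbd t0) ⟨p, hp, rfl⟩
    have h1 : gmap t1 p ≤ sSup (gmap t1 '' D) := le_csSup (hbd t1) ⟨p, hp, rfl⟩
    have : gmap (a * t0 + b * t1) p = a * gmap t0 p + b * gmap t1 p := by
      simp only [gmap]
      have : p.1 = (a + b) * p.1 := by rw [hab, one_mul]
      nth_rewrite 1 [this]; ring
    rw [this]
    exact add_le_add (mul_le_mul_of_nonneg_left h0 ha) (mul_le_mul_of_nonneg_left h1 hb)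
  have hInf : a * sInf (gmap t0 '' D) + b * sInf (gmap t1 '' D)
      ≤ sInf (gmap (a * t0 + b * t1) '' D) := by
    apply le_csInf (himne _)
    rintro r ⟨p, hp, rfl⟩
    have h0 : sInf (gmap t0 '' D) ≤ gmap t0 p := csInf_le (hbdd t0) ⟨p, hp, rfl⟩
    have h1 : sInf (gmap t1 '' D) ≤ gmap t1 p := csInf_le (hbdd t1) ⟨p, hp, rfl⟩
    have : gmap (a * t0 + b * t1) p = a * gmap t0 p + b * gmap t1 p := by
      simp only [gmap]
      have : p.1 = (a + b) * p.1 := by rw [hab, one_mul]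
      nth_rewrite 1 [this]; ring
    rw [this]
    exact add_le_add (mul_le_mul_of_nonneg_left h0 ha) (mul_le_mul_of_nonneg_left h1 hb)
  calc ENNReal.ofReal (sSup (gmap (a * t0 + b * t1) '' D) - sInf (gmap (a * t0 + b * t1) '' D))
      ≤ ENNReal.ofReal (a * (sSup (gmap t0 '' D) - sInf (gmap t0 '' D))
          + b * (sSup (gmap t1 '' D) - sInf (gmap t1 '' D))) := by
        apply ENNReal.ofReal_le_ofReal
        have := sub_le_sub hSup hInf
        calc sSup (gmap (a * t0 + b * t1) '' D) - sInf (gmap (a * t0 + b * t1) '' D)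
            ≤ (a * sSup (gmap t0 '' D) + b * sSup (gmap t1 '' D))
              - (a * sInf (gmap t0 '' D) + b * sInf (gmap t1 '' D)) := this
          _ = a * (sSup (gmap t0 '' D) - sInf (gmap t0 '' D))
              + b * (sSup (gmap t1 '' D) - sInf (gmap t1 '' D)) := by ring
    _ = ENNReal.ofReal a * ENNReal.ofReal (sSup (gmap t0 '' D) - sInf (gmap t0 '' D))
          + ENNReal.ofReal b * ENNReal.ofReal (sSup (gmap t1 '' D) - sInf (gmap t1 '' D)) := by
        rw [ENNReal.ofReal_add (mul_nonneg ha (hdiff t0)) (mul_nonneg hb (hdiff t1)),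
          ENNReal.ofReal_mul ha, ENNReal.ofReal_mul hb]

/-- The shear map. -/
private def shear {Y : Type*} [AddCommGroup Y] [Module ℝ Y] (t : ℝ) :
    ((ℝ × ℝ) × Y) → ℝ × Y := fun p => (p.1.1 + t * p.1.2, p.2)

private lemma shear_linear {Y : Type*} [AddCommGroup Y] [Module ℝ Y] (t : ℝ) :
    IsLinearMap ℝ (shear (Y := Y) t) := by
  constructor
  · intro p q; simp [shear, Prod.ext_iff]; ring
  · intro c p; simp [shear, Prod.ext_iff, smul_eq_mul]; ring

private lemma shear_continuous {Y : Type*} [NormedAddCommGroup Y] [Module ℝ Y] (t : ℝ) :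
    Continuous (shear (Y := Y) t) := by
  apply Continuous.prodMk
  · exact (continuous_fst.comp continuous_fst).add
      (continuous_const.mul (continuous_snd.comp continuous_fst))
  · exact continuous_snd

/-- Key lemma: the volume of the shear image of a fixed compact convex body is convex in `t`. -/
private lemma key {m : ℕ} (C : Set ((ℝ × ℝ) × (Fin m → ℝ))) (hC : IsCompact C)
    (hconv : Convex ℝ C) :
    ConvexOn ℝ Set.univ fun t : ℝ => (volume (shear t '' C)).toReal := by
  have hAc : ∀ t : ℝ, IsCompact (shear t '' C) := fun t => hC.image (shear_continuous t)
  have hAm : ∀ t : ℝ, MeasurableSet (shear t '' C) :=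
    fun t => (hAc t).isClosed.measurableSet
  have hfin : ∀ t : ℝ, volume (shear t '' C) ≠ ⊤ := fun t => (hAc t).measure_lt_top.ne
  -- Fubini
  have hvol : ∀ t : ℝ, volume (shear t '' C)
      = ∫⁻ y, volume ((fun r => (r, y)) ⁻¹' (shear t '' C)) := by
    intro t
    rw [MeasureTheory.Measure.volume_eq_prod, Measure.prod_apply_symm (hAm t)]
  -- slices
  have hslice : ∀ (t : ℝ) (y : Fin m → ℝ),
      (fun r => (r, y)) ⁻¹' (shear t '' C) = gmap t '' {p : ℝ × ℝ | (p, y) ∈ C} := by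
    intro t y
    ext r
    constructor
    · rintro ⟨⟨p, z⟩, hpz, h⟩
      have h1 : p.1 + t * p.2 = r := congrArg Prod.fst h
      have h2 : z = y := congrArg Prod.snd h
      exact ⟨p, by rwa [← h2], h1⟩
    · rintro ⟨p, hp, rfl⟩
      exact ⟨(p, y), hp, rfl⟩
  have hCyc : ∀ y : Fin m → ℝ, IsCompact {p : ℝ × ℝ | (p, y) ∈ C} := by
    intro y
    have : {p : ℝ × ℝ | (p, y) ∈ C} = Prod.fst '' (C ∩ (Prod.snd ⁻¹' {y})) := by
      ext p
      constructor
      · intro hp; exact ⟨(p, y), ⟨hp, rfl⟩, rfl⟩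
      · rintro ⟨q, ⟨hq, hq2⟩, rfl⟩
        have h2 : q.2 = y := hq2
        show (q.1, y) ∈ C
        rw [← h2, Prod.mk.eta]
        exact hq
    rw [this]
    exact (hC.inter_right (isClosed_singleton.preimage continuous_snd)).image continuous_fst
  have hCyconv : ∀ y : Fin m → ℝ, Convex ℝ {p : ℝ × ℝ | (p, y) ∈ C} := by
    intro y p hp q hq a b ha hb hab
    have := hconv hp hq ha hb hab
    have hy : a • ((p, y) : (ℝ × ℝ) × (Fin m → ℝ)) + b • (q, y) = (a • p + b • q, y) := by
      have : a • y + b • y = y := by rw [← add_smul, hab, one_smul]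
      simp [Prod.ext_iff, this]
    rwa [hy] at this
  constructor
  · exact convex_univ
  intro t0 _ t1 _ a b ha hb hab
  simp only [smul_eq_mul]
  have hmain : volume (shear (a * t0 + b * t1) '' C)
      ≤ ENNReal.ofReal a * volume (shear t0 '' C) + ENNReal.ofReal b * volume (shear t1 '' C) := by
    rw [hvol (a * t0 + b * t1), hvol t0, hvol t1]
    calc (∫⁻ y, volume ((fun r => (r, y)) ⁻¹' (shear (a * t0 + b * t1) '' C)))
        ≤ ∫⁻ y, (ENNReal.ofReal a * volume ((fun r => (r, y)) ⁻¹' (shear t0 '' C))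
            + ENNReal.ofReal b * volume ((fun r => (r, y)) ⁻¹' (shear t1 '' C))) := by
          apply lintegral_mono
          intro y
          dsimp only
          rw [hslice, hslice, hslice]
          exact slice_le (hCyc y) (hCyconv y) ha hb hab
      _ = ENNReal.ofReal a * (∫⁻ y, volume ((fun r => (r, y)) ⁻¹' (shear t0 '' C)))
            + ENNReal.ofReal b * (∫⁻ y, volume ((fun r => (r, y)) ⁻¹' (shear t1 '' C))) := by
          rw [lintegral_add_left ((measurable_measure_prodMk_right (hAm t0)).const_mul _),
            lintegral_const_mul _ (measurable_measure_prodMk_right (hAm t1)),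
            lintegral_const_mul _ (measurable_measure_prodMk_right (hAm t0))]
  have hrhs : (ENNReal.ofReal a * volume (shear t0 '' C)
      + ENNReal.ofReal b * volume (shear t1 '' C)) ≠ ⊤ :=
    ENNReal.add_ne_top.2 ⟨ENNReal.mul_ne_top ENNReal.ofReal_ne_top (hfin t0),
      ENNReal.mul_ne_top ENNReal.ofReal_ne_top (hfin t1)⟩
  have := ENNReal.toReal_mono hrhs hmain
  rwa [ENNReal.toReal_add (ENNReal.mul_ne_top ENNReal.ofReal_ne_top (hfin t0))
      (ENNReal.mul_ne_top ENNReal.ofReal_ne_top (hfin t1)), ENNReal.toReal_mul,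
    ENNReal.toReal_mul, ENNReal.toReal_ofReal ha, ENNReal.toReal_ofReal hb] at this

/-- Volume of closure of a convex set. -/
private lemma vol_closure_conv {W : Type*} [NormedAddCommGroup W] [NormedSpace ℝ W]
    [MeasurableSpace W] [BorelSpace W] [FiniteDimensional ℝ W] (μ : Measure W)
    [μ.IsAddHaarMeasure] {s : Set W} (hs : Convex ℝ s) : μ (closure s) = μ s := by
  refine le_antisymm ?_ (measure_mono subset_closure)
  have hsub : closure s ⊆ s ∪ frontier s := by
    intro z hz
    by_cases h : z ∈ s
    · exact Or.inl h
    · exact Or.inr ⟨hz, fun hint => h (interior_subset hint)⟩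
  calc μ (closure s) ≤ μ (s ∪ frontier s) := measure_mono hsub
    _ ≤ μ s + μ (frontier s) := measure_union_le _ _
    _ = μ s := by rw [hs.addHaar_frontier μ, add_zero]

private lemma vol_image_eq {α β : Type*} [MeasurableSpace α] [MeasurableSpace β]
    {μ : Measure α} {ν : Measure β} (e : α ≃ᵐ β) (h : MeasurePreserving e μ ν) (S : Set α) :
    ν (e '' S) = μ S := by
  have h2 : ν.map e.symm = μ := (MeasurePreserving.symm e h).map_eq
  rw [← h2, MeasurableEquiv.map_apply]
  exact congrArg ν (Equiv.image_eq_preimage_symm e.toEquiv S)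

end Aux

/-- Rogers–Shephard: the volume of a linear parameter system is a convex function of `t`. -/
theorem lps_volume_convexOn {n : ℕ} {ι : Type*} [Nonempty ι]
    (x : ι → E n) (lam : ι → ℝ) (v : E n)
    (hxb : Bornology.IsBounded (Set.range x)) (hlb : Bornology.IsBounded (Set.range lam)) :
    ConvexOn ℝ Set.univ
      (fun t : ℝ =>
        (volume (convexHull ℝ (Set.range fun i => x i + (lam i * t) • v))).toReal) := by
  rcases eq_or_ne v 0 with rfl | hv
  · simp only [smul_zero, add_zero]
    exact convexOn_const _ convex_univ
  obtain ⟨m, rfl⟩ : ∃ m, n = m + 1 := by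
    cases n with
    | zero =>
      exfalso; apply hv
      ext i; exact i.elim0
    | succ m => exact ⟨m, rfl⟩
  -- normalize the direction
  set e : E (m + 1) := (‖v‖ : ℝ)⁻¹ • v with he
  have hnv : ‖v‖ ≠ 0 := norm_ne_zero_iff.2 hv
  have hee : ‖e‖ = 1 := norm_smul_inv_norm hv
  set c : ι → ℝ := fun i => ‖v‖ * lam i with hc
  have hpts : ∀ (t : ℝ) (i : ι), x i + (lam i * t) • v = x i + (c i * t) • e := by
    intro t i
    congr 1
    rw [he, smul_smul, hc]
    congr 1
    field_simp
  -- orthonormal basis with b 0 = e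
  have hortho : Orthonormal ℝ (({0} : Set (Fin (m + 1))).restrict fun _ => e) := by
    constructor
    · intro i; exact hee
    · intro i j hij
      exfalso
      apply hij
      apply Subtype.ext
      have hi := i.2; have hj := j.2
      simp only [mem_singleton_iff] at hi hj
      rw [hi, hj]
  obtain ⟨b, hb⟩ := hortho.exists_orthonormalBasis_extension_of_card_eq
    (by simp [finrank_euclideanSpace_fin])
  have hb0 : b 0 = e := hb 0 rfl
  -- the composite map Φ
  set Φ1 : E (m + 1) ≃ᵐ EuclideanSpace ℝ (Fin (m + 1)) :=
    b.repr.toHomeomorph.toMeasurableEquiv with hΦ1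
  set Φ2 : EuclideanSpace ℝ (Fin (m + 1)) ≃ᵐ (Fin (m + 1) → ℝ) :=
    (MeasurableEquiv.toLp 2 (Fin (m + 1) → ℝ)).symm with hΦ2
  set Φ3 : (Fin (m + 1) → ℝ) ≃ᵐ ℝ × (Fin m → ℝ) :=
    MeasurableEquiv.piFinSuccAbove (fun _ : Fin (m + 1) => ℝ) 0 with hΦ3
  set Φ : E (m + 1) → ℝ × (Fin m → ℝ) := fun z => Φ3 (Φ2 (Φ1 z)) with hΦ
  have hΦ1p : MeasurePreserving Φ1 volume volume := b.repr.measurePreserving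
  have hΦ2p : MeasurePreserving Φ2 volume volume :=
    EuclideanSpace.volume_preserving_symm_measurableEquiv_toLp (Fin (m + 1))
  have hΦ3p : MeasurePreserving Φ3 volume volume :=
    volume_preserving_piFinSuccAbove (fun _ : Fin (m + 1) => ℝ) 0
  have hΦvol : ∀ S : Set (E (m + 1)), volume (Φ '' S) = volume S := by
    intro S
    have himg : Φ '' S = Φ3 '' (Φ2 '' (Φ1 '' S)) := by
      rw [Set.image_image, Set.image_image]
    rw [himg, vol_image_eq Φ3 hΦ3p, vol_image_eq Φ2 hΦ2p, vol_image_eq Φ1 hΦ1p]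
  have hΦlin : IsLinearMap ℝ Φ := by
    constructor
    · intro p q
      show Φ3 (Φ2 (Φ1 (p + q))) = _
      have h1 : Φ1 (p + q) = Φ1 p + Φ1 q := b.repr.map_add p q
      rw [h1]; rfl
    · intro cc p
      show Φ3 (Φ2 (Φ1 (cc • p))) = _
      have h1 : Φ1 (cc • p) = cc • Φ1 p := b.repr.map_smul cc p
      rw [h1]; rfl
  have hΦe : Φ e = (1, 0) := by
    have h1 : Φ1 e = EuclideanSpace.single 0 1 := by
      show b.repr e = _
      rw [← hb0, OrthonormalBasis.repr_self]
    show Φ3 (Φ2 (Φ1 e)) = (1, 0)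
    rw [h1]
    have h2 : Φ2 (EuclideanSpace.single 0 (1 : ℝ)) = Pi.single 0 1 := by
      funext j
      rw [hΦ2, MeasurableEquiv.coe_toLp_symm,
        EuclideanSpace.single_apply, Pi.single_apply]
    rw [h2]
    have h3 : ∀ g : Fin (m + 1) → ℝ,
        Φ3 g = (g 0, fun j => g ((0 : Fin (m + 1)).succAbove j)) := fun g => rfl
    rw [h3]
    refine Prod.ext ?_ ?_
    · exact Pi.single_eq_same (M := fun _ : Fin (m + 1) => ℝ) 0 1
    · funext j
      dsimp only
      rw [Fin.zero_succAbove]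
      exact Pi.single_eq_of_ne (M := fun _ : Fin (m + 1) => ℝ) (Fin.succ_ne_zero j) 1
  set R : ι → ℝ := fun i => (Φ (x i)).1 with hR
  set Y : ι → Fin m → ℝ := fun i => (Φ (x i)).2 with hY
  have hmap : ∀ (t : ℝ) (i : ι), Φ (x i + (c i * t) • e) = (R i + c i * t, Y i) := by
    intro t i
    rw [hΦlin.map_add, hΦlin.map_smul, hΦe]
    refine Prod.ext ?_ ?_
    · show (Φ (x i)).1 + (c i * t) * 1 = R i + c i * t
      rw [mul_one, hR]
    · show (Φ (x i)).2 + (c i * t) • (0 : Fin m → ℝ) = Y i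
      rw [smul_zero, add_zero, hY]
  -- the body C in (ℝ × ℝ) × (Fin m → ℝ)
  set q : ι → (ℝ × ℝ) × (Fin m → ℝ) := fun i => ((R i, c i), Y i) with hq
  set C : Set ((ℝ × ℝ) × (Fin m → ℝ)) := closure (convexHull ℝ (Set.range q)) with hC
  -- boundedness
  obtain ⟨Rx, hRx⟩ := isBounded_iff_forall_norm_le.1 hxb
  obtain ⟨Rl, hRl⟩ := isBounded_iff_forall_norm_le.1 hlb
  set ΦC : E (m + 1) →L[ℝ] ℝ × (Fin m → ℝ) :=
    LinearMap.toContinuousLinearMap (IsLinearMap.mk' Φ hΦlin) with hΦC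
  have hΦCeq : ∀ z, ΦC z = Φ z := fun z => rfl
  have hqb : Bornology.IsBounded (Set.range q) := by
    rw [isBounded_iff_forall_norm_le]
    refine ⟨max (max (‖ΦC‖ * Rx) (‖v‖ * Rl)) (‖ΦC‖ * Rx), ?_⟩
    rintro z ⟨i, rfl⟩
    have hΦx : ‖Φ (x i)‖ ≤ ‖ΦC‖ * Rx := by
      rw [← hΦCeq]
      calc ‖ΦC (x i)‖ ≤ ‖ΦC‖ * ‖x i‖ := ΦC.le_opNorm (x i)
        _ ≤ ‖ΦC‖ * Rx := mul_le_mul_of_nonneg_left (hRx (x i) ⟨i, rfl⟩) (norm_nonneg ΦC)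
    have h1 : ‖R i‖ ≤ ‖ΦC‖ * Rx := le_trans (norm_fst_le (Φ (x i))) hΦx
    have h2 : ‖Y i‖ ≤ ‖ΦC‖ * Rx := le_trans (norm_snd_le (Φ (x i))) hΦx
    have h3 : ‖c i‖ ≤ ‖v‖ * Rl := by
      rw [hc]
      simp only [norm_mul, norm_norm]
      exact mul_le_mul_of_nonneg_left (hRl (lam i) ⟨i, rfl⟩) (norm_nonneg v)
    rw [hq]
    show ‖(((R i, c i), Y i) : (ℝ × ℝ) × (Fin m → ℝ))‖ ≤ _
    rw [Prod.norm_def, Prod.norm_def]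
    refine max_le (max_le ?_ ?_) ?_
    · exact h1.trans ((le_max_left _ _).trans (le_max_left _ _))
    · exact h3.trans ((le_max_right _ _).trans (le_max_left _ _))
    · exact h2.trans (le_max_right _ _)
  have hCcomp : IsCompact C := by
    refine Metric.isCompact_of_isClosed_isBounded isClosed_closure ?_
    exact (isBounded_convexHull.2 hqb).closure
  have hCconv : Convex ℝ C := (convex_convexHull ℝ _).closure
  -- shear image of C
  have hshearC : ∀ t : ℝ,
      shear t '' C = closure (convexHull ℝ (Set.range fun i => (R i + c i * t, Y i))) := by
    intro t
    have him : shear t '' (convexHull ℝ (Set.range q))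
        = convexHull ℝ (Set.range fun i => (R i + c i * t, Y i)) := by
      rw [(shear_linear t).image_convexHull, ← Set.range_comp]
      have hfg : shear t ∘ q = fun i => ((R i + c i * t, Y i) : ℝ × (Fin m → ℝ)) := by
        funext i
        show ((R i + t * c i : ℝ), Y i) = _
        rw [mul_comm]
      rw [hfg]
    refine Subset.antisymm ?_ ?_
    · rw [← him]
      exact image_closure_subset_closure_image (shear_continuous t)
    · refine closure_minimal ?_ ((hCcomp.image (shear_continuous t)).isClosed)
      rw [← him]
      exact Set.image_mono subset_closure
  -- instance
  haveI hHaar : MeasureTheory.Measure.IsAddHaarMeasure (volume : Measure (ℝ × (Fin m → ℝ))) := by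
    rw [MeasureTheory.Measure.volume_eq_prod]; infer_instance
  -- volume identity
  have hvols : ∀ t : ℝ,
      volume (convexHull ℝ (Set.range fun i => x i + (lam i * t) • v))
        = volume (shear t '' C) := by
    intro t
    have hr1 : (Set.range fun i => x i + (lam i * t) • v)
        = Set.range fun i => x i + (c i * t) • e :=
      congrArg Set.range (funext fun i => hpts t i)
    have hr2 : Φ '' (convexHull ℝ (Set.range fun i => x i + (c i * t) • e))
        = convexHull ℝ (Set.range fun i => (R i + c i * t, Y i)) := by
      rw [hΦlin.image_convexHull, ← Set.range_comp]
      have hfg : Φ ∘ (fun i => x i + (c i * t) • e)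
          = fun i => ((R i + c i * t, Y i) : ℝ × (Fin m → ℝ)) :=
        funext fun i => hmap t i
      rw [hfg]
    calc volume (convexHull ℝ (Set.range fun i => x i + (lam i * t) • v))
        = volume (convexHull ℝ (Set.range fun i => x i + (c i * t) • e)) := by rw [hr1]
      _ = volume (Φ '' (convexHull ℝ (Set.range fun i => x i + (c i * t) • e))) :=
          (hΦvol _).symm
      _ = volume (convexHull ℝ (Set.range fun i => (R i + c i * t, Y i))) := by rw [hr2]
      _ = volume (closure (convexHull ℝ (Set.range fun i => (R i + c i * t, Y i)))) :=
          (vol_closure_conv volume (convex_convexHull ℝ _)).symm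
      _ = volume (shear t '' C) := by rw [hshearC t]
  have hfun : (fun t : ℝ =>
      (volume (convexHull ℝ (Set.range fun i => x i + (lam i * t) • v))).toReal)
      = fun t : ℝ => (volume (shear t '' C)).toReal :=
    funext fun t => by rw [hvols t]
  rw [hfun]
  exact key C hCcomp hCconv
end
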